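/- Fix an integer ℓ ≥ 0 and an integer N ≥ 2^{ℓ+2}. Let j be an integer with 1 ≤ |j| ≤ N/2^{ℓ+2}, and let α ∈ [2^ℓ/N, 2^{ℓ+1}/N). Then |e^{2πi j K(α) α} − 1| ≤ |e^{2πi j α} − 1|, and consequently E(j; N) ≤ 2^ℓ/N. -/

import Mathlib

open MeasureTheory

/-- `e t = exp(2πit)`. -/
noncomputable def e (t : ℝ) : ℂ := Complex.exp (2 * Real.pi * Complex.I * t)

/-- For `0 < α ≤ 1`, `K α` is the unique positive integer with `(K α - 1) α < 1 ≤ K α · α`. -/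
noncomputable def K (α : ℝ) : ℕ := ⌈1 / α⌉₊

/-- `E(j; N) = ∫_{2^ℓ/N}^{2^(ℓ+1)/N} |∑_{k=0}^{K(α)-1} e^(2πijkα)|² dα`. -/
noncomputable def E (ℓ N : ℕ) (j : ℤ) : ℝ :=
  ∫ α in ((2:ℝ)^ℓ / N)..((2:ℝ)^(ℓ+1) / N),
    ‖∑ k ∈ Finset.range (K α), e ((j : ℝ) * ((k : ℝ) * α))‖ ^ 2

lemma norm_e_sub_one (t : ℝ) : ‖e t - 1‖ = 2 * |Real.sin (Real.pi * t)| := by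
  have h : e t - 1 = Complex.ofReal (Real.cos (2 * Real.pi * t) - 1)
      + Complex.ofReal (Real.sin (2 * Real.pi * t)) * Complex.I := by
    rw [e]
    have : (2 * Real.pi * Complex.I * t) = ((2 * Real.pi * t : ℝ) : ℂ) * Complex.I := by
      push_cast; ring
    rw [this, Complex.exp_mul_I]
    push_cast
    ring
  rw [h]
  rw [Complex.norm_def, Complex.normSq_add_mul_I]
  have h1 := Real.sin_sq_add_cos_sq (2 * Real.pi * t)
  have h2 := Real.cos_two_mul (Real.pi * t)
  have h3 : 2 * (Real.pi * t) = 2 * Real.pi * t := by ring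
  rw [h3] at h2
  have : (Real.cos (2 * Real.pi * t) - 1) ^ 2 + Real.sin (2 * Real.pi * t) ^ 2
      = (2 * |Real.sin (Real.pi * t)|) ^ 2 := by
    have h4 := Real.sin_sq_add_cos_sq (Real.pi * t)
    rw [mul_pow, sq_abs]
    nlinarith [h1, h2, h4]
  rw [this, Real.sqrt_sq (by positivity)]

lemma e_add_int (t : ℝ) (n : ℤ) : e (t + n) = e t := by
  rw [e, e]
  have : 2 * Real.pi * Complex.I * ((t : ℝ) + (n : ℝ) : ℝ)
      = 2 * Real.pi * Complex.I * t + n * (2 * Real.pi * Complex.I) := by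
    push_cast; ring
  rw [this, Complex.exp_add, Complex.exp_int_mul_two_pi_mul_I, mul_one]

lemma e_nat_mul (s : ℝ) (k : ℕ) : e ((k : ℝ) * s) = e s ^ k := by
  rw [e, e, ← Complex.exp_nat_mul]
  congr 1
  push_cast; ring

lemma key_ineq (ℓ N : ℕ) (hN : 2 ^ (ℓ + 2) ≤ N) (j : ℤ)
    (hj1 : 1 ≤ |j|) (hj2 : (|j| : ℝ) ≤ (N : ℝ) / 2 ^ (ℓ + 2))
    (α : ℝ) (hα : α ∈ Set.Icc ((2:ℝ)^ℓ / N) ((2:ℝ)^(ℓ+1) / N)) :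
    ‖e ((j : ℝ) * (K α : ℝ) * α) - 1‖ ≤ ‖e ((j : ℝ) * α) - 1‖ := by
  have hNpos : (0:ℝ) < N := by
    have : (0:ℕ) < N := lt_of_lt_of_le (Nat.pow_pos (by norm_num)) hN
    exact_mod_cast this
  have hαpos : 0 < α := lt_of_lt_of_le (by positivity) hα.1
  have hjα : (|j| : ℝ) * α ≤ 1/2 := by
    have h1 : (|j| : ℝ) * α ≤ ((N : ℝ) / 2 ^ (ℓ + 2)) * ((2:ℝ)^(ℓ+1) / N) := by
      apply mul_le_mul hj2 hα.2 (le_of_lt hαpos)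
      positivity
    calc (|j| : ℝ) * α ≤ ((N : ℝ) / 2 ^ (ℓ + 2)) * ((2:ℝ)^(ℓ+1) / N) := h1
      _ = 1/2 := by field_simp; ring
  have hjabs : (1:ℝ) ≤ (|j| : ℝ) := by exact_mod_cast hj1
  have hK1 : 1 ≤ (K α : ℝ) * α := by
    have h : 1 / α ≤ (K α : ℝ) := Nat.le_ceil (1 / α)
    calc (1:ℝ) = (1/α) * α := by field_simp
      _ ≤ (K α : ℝ) * α := mul_le_mul_of_nonneg_right h hαpos.le
  have hK2 : (K α : ℝ) * α < 1 + α := by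
    have h : (K α : ℝ) < 1/α + 1 := Nat.ceil_lt_add_one (by positivity)
    calc (K α : ℝ) * α < (1/α + 1) * α := mul_lt_mul_of_pos_right h hαpos
      _ = 1 + α := by field_simp
  set θ : ℝ := (K α : ℝ) * α - 1 with hθ
  have hθ0 : 0 ≤ θ := by simp only [hθ]; linarith
  have hθα : θ ≤ α := by simp only [hθ]; linarith
  have hshift : e ((j : ℝ) * (K α : ℝ) * α) = e ((j : ℝ) * θ) := by
    have h : (j : ℝ) * (K α : ℝ) * α = (j : ℝ) * θ + ((j : ℤ) : ℝ) := by
      simp only [hθ]; ring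
    rw [h, e_add_int]
  rw [hshift, norm_e_sub_one, norm_e_sub_one]
  have habs : ∀ x : ℝ, 0 ≤ x → (|j|:ℝ) * x ≤ 1/2 →
      |Real.sin (Real.pi * ((j:ℝ) * x))| = Real.sin (Real.pi * ((|j|:ℝ) * x)) := by
    intro x hx hx2
    have h1 : |Real.sin (Real.pi * ((j:ℝ) * x))| = |Real.sin (Real.pi * ((|j|:ℝ) * x))| := by
      rcases abs_cases ((j:ℝ)) with ⟨h, _⟩ | ⟨h, _⟩
      · rw [h]
      · rw [h]
        rw [show Real.pi * (-(j:ℝ) * x) = -(Real.pi * ((j:ℝ) * x)) by ring, Real.sin_neg, abs_neg]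
    rw [h1]
    apply abs_of_nonneg
    apply Real.sin_nonneg_of_nonneg_of_le_pi
    · positivity
    · have hnn : 0 ≤ (|j|:ℝ) * x := mul_nonneg (abs_nonneg _) hx
      nlinarith [Real.pi_pos]
  have hjθ : (|j|:ℝ) * θ ≤ 1/2 := by
    calc (|j|:ℝ) * θ ≤ (|j|:ℝ) * α := mul_le_mul_of_nonneg_left hθα (by positivity)
      _ ≤ 1/2 := hjα
  rw [habs θ hθ0 hjθ, habs α hαpos.le hjα]
  gcongr
  have hmono := Real.strictMonoOn_sin.monotoneOn
  have hmem : ∀ x : ℝ, 0 ≤ x → (|j|:ℝ) * x ≤ 1/2 →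
      Real.pi * ((|j|:ℝ) * x) ∈ Set.Icc (-(Real.pi/2)) (Real.pi/2) := by
    intro x hx hx2
    have hnn : 0 ≤ (|j|:ℝ) * x := mul_nonneg (abs_nonneg _) hx
    constructor
    · nlinarith [Real.pi_pos]
    · nlinarith [Real.pi_pos]
  exact hmono (hmem θ hθ0 hjθ) (hmem α hαpos.le hjα)
    (mul_le_mul_of_nonneg_left (mul_le_mul_of_nonneg_left hθα (by positivity)) Real.pi_pos.le)

lemma sum_bound (ℓ N : ℕ) (hN : 2 ^ (ℓ + 2) ≤ N) (j : ℤ)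
    (hj1 : 1 ≤ |j|) (hj2 : (|j| : ℝ) ≤ (N : ℝ) / 2 ^ (ℓ + 2))
    (α : ℝ) (hα : α ∈ Set.Icc ((2:ℝ)^ℓ / N) ((2:ℝ)^(ℓ+1) / N)) :
    ‖∑ k ∈ Finset.range (K α), e ((j : ℝ) * ((k : ℝ) * α))‖ ≤ 1 := by
  have hNpos : (0:ℝ) < N := by
    have : (0:ℕ) < N := lt_of_lt_of_le (Nat.pow_pos (by norm_num)) hN
    exact_mod_cast this
  have hαpos : 0 < α := lt_of_lt_of_le (by positivity) hα.1
  have hjabs : (1:ℝ) ≤ |(j:ℝ)| := by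
    have : (1:ℤ) ≤ |j| := hj1
    calc (1:ℝ) = ((1:ℤ):ℝ) := by norm_num
      _ ≤ ((|j|:ℤ):ℝ) := by exact_mod_cast this
      _ = |(j:ℝ)| := by push_cast; ring
  have hjα : |(j:ℝ)| * α ≤ 1/2 := by
    have h1 : |(j:ℝ)| * α ≤ ((N : ℝ) / 2 ^ (ℓ + 2)) * ((2:ℝ)^(ℓ+1) / N) :=
      mul_le_mul hj2 hα.2 hαpos.le (by positivity)
    calc |(j:ℝ)| * α ≤ ((N : ℝ) / 2 ^ (ℓ + 2)) * ((2:ℝ)^(ℓ+1) / N) := h1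
      _ = 1/2 := by field_simp; ring
  set x : ℂ := e ((j : ℝ) * α) with hx
  have hterm : ∀ k : ℕ, e ((j : ℝ) * ((k : ℝ) * α)) = x ^ k := by
    intro k
    rw [hx, ← e_nat_mul]
    congr 1
    ring
  have hx1 : x ≠ 1 := by
    rw [hx, e]
    intro hcon
    rw [Complex.exp_eq_one_iff] at hcon
    obtain ⟨n, hn⟩ := hcon
    have h2 : (2 * Real.pi * Complex.I : ℂ) ≠ 0 := by
      simp [Complex.I_ne_zero, Real.pi_ne_zero]
    have hjαn : ((j:ℝ) * α : ℝ) = (n:ℝ) := by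
      have hc : ((((j:ℝ) * α : ℝ)) : ℂ) = (n : ℂ) :=
        mul_left_cancel₀ h2 (hn.trans (mul_comm _ _))
      exact_mod_cast hc
    have habs_eq : |(j:ℝ) * α| = |(j:ℝ)| * α := by
      rw [abs_mul, abs_of_pos hαpos]
    have h0 : (0:ℝ) < |(j:ℝ) * α| := by rw [habs_eq]; nlinarith
    have h12 : |(j:ℝ) * α| ≤ 1/2 := by rw [habs_eq]; exact hjα
    rw [hjαn] at h0 h12
    have hn0 : (n:ℝ) ≠ 0 := by
      intro h; rw [h] at h0; simp at h0
    have hn0' : n ≠ 0 := by exact_mod_cast hn0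
    have : (1:ℝ) ≤ |(n:ℝ)| := by
      have h1 : (1:ℤ) ≤ |n| := Int.one_le_abs hn0'
      calc (1:ℝ) = ((1:ℤ):ℝ) := by norm_num
        _ ≤ ((|n|:ℤ):ℝ) := by exact_mod_cast h1
        _ = |(n:ℝ)| := by push_cast; ring
    linarith
  simp only [hterm]
  rw [geom_sum_eq hx1]
  rw [norm_div]
  rw [div_le_one (by simpa [sub_ne_zero] using hx1 : (0:ℝ) < ‖x - 1‖)]
  have hxK : x ^ (K α) = e ((j : ℝ) * (K α : ℝ) * α) := by
    rw [hx, ← e_nat_mul]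
    congr 1
    ring
  rw [hxK]
  exact key_ineq ℓ N hN j hj1 hj2 α hα

/-- For small `j`, namely `1 ≤ |j| ≤ N/2^(ℓ+2)`, and `α ∈ [2^ℓ/N, 2^(ℓ+1)/N)`, one has
`|e^(2πijK(α)α) - 1| ≤ |e^(2πijα) - 1|` and consequently `E(j; N) ≤ 2^ℓ/N`. -/
theorem E_bound_small_j (ℓ N : ℕ) (hN : 2 ^ (ℓ + 2) ≤ N) (j : ℤ)
    (hj1 : 1 ≤ |j|) (hj2 : (|j| : ℝ) ≤ (N : ℝ) / 2 ^ (ℓ + 2))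
    (α : ℝ) (hα : α ∈ Set.Ico ((2:ℝ)^ℓ / N) ((2:ℝ)^(ℓ+1) / N)) :
    ‖e ((j : ℝ) * (K α : ℝ) * α) - 1‖ ≤ ‖e ((j : ℝ) * α) - 1‖ ∧
      E ℓ N j ≤ (2:ℝ)^ℓ / N := by
  have hNpos : (0:ℝ) < N := by
    have : (0:ℕ) < N := lt_of_lt_of_le (Nat.pow_pos (by norm_num)) hN
    exact_mod_cast this
  constructor
  · exact key_ineq ℓ N hN j hj1 hj2 α ⟨hα.1, hα.2.le⟩
  · have hab : ((2:ℝ)^ℓ / N) ≤ ((2:ℝ)^(ℓ+1) / N) := by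
      gcongr
      · norm_num
      · exact Nat.le_succ ℓ
    have hE : ‖E ℓ N j‖ ≤ 1 * |((2:ℝ)^(ℓ+1)/N) - ((2:ℝ)^ℓ/N)| := by
      apply intervalIntegral.norm_integral_le_of_norm_le_const
      intro x hx
      rw [Set.uIoc_of_le hab] at hx
      have hb := sum_bound ℓ N hN j hj1 hj2 x ⟨hx.1.le, hx.2⟩
      rw [Real.norm_eq_abs, abs_of_nonneg (by positivity)]
      calc ‖∑ k ∈ Finset.range (K x), e ((j : ℝ) * ((k : ℝ) * x))‖ ^ 2
          ≤ 1 ^ 2 := pow_le_pow_left₀ (norm_nonneg _) hb 2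
        _ = 1 := one_pow 2
    have hdiff : ((2:ℝ)^(ℓ+1)/N) - ((2:ℝ)^ℓ/N) = (2:ℝ)^ℓ/N := by
      field_simp
      ring
    calc E ℓ N j ≤ |E ℓ N j| := le_abs_self _
      _ = ‖E ℓ N j‖ := (Real.norm_eq_abs _).symm
      _ ≤ 1 * |((2:ℝ)^(ℓ+1)/N) - ((2:ℝ)^ℓ/N)| := hE
      _ = (2:ℝ)^ℓ/N := by
          rw [one_mul, abs_of_nonneg (by linarith), hdiff]
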